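/- Let g ≥ 1 and let v ∈ ℤ^{2g} be a primitive vector (the gcd of its coordinates is 1). Then the symplectic transvection T_v : x ↦ x + ω(x,v)·v lies in Sp(2g,ℤ), and T_v is a product of two elements of finite order in Sp(2g,ℤ). -/

import Mathlib

open Matrix

section AuxGeneric

variable {n : Type*} [Fintype n]

private lemma vmv_mul_vmv (a b c d : n → ℤ) :
    vecMulVec a b * vecMulVec c d = (b ⬝ᵥ c) • vecMulVec a d := by
  ext i j
  simp only [mul_apply, vecMulVec_apply, Matrix.smul_apply, dotProduct, smul_eq_mul, Finset.sum_mul]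
  exact Finset.sum_congr rfl fun k _ => by ring

private lemma vmv_mul_mat (a b : n → ℤ) (M : Matrix n n ℤ) :
    vecMulVec a b * M = vecMulVec a (Mᵀ *ᵥ b) := by
  ext i j
  simp only [mul_apply, vecMulVec_apply, mulVec, dotProduct, transpose_apply, Finset.mul_sum]
  exact Finset.sum_congr rfl fun k _ => by ring

private lemma mat_mul_vmv (M : Matrix n n ℤ) (a b : n → ℤ) :
    M * vecMulVec a b = vecMulVec (M *ᵥ a) b := by
  ext i j
  simp only [mul_apply, vecMulVec_apply, mulVec, dotProduct, Finset.sum_mul]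
  exact Finset.sum_congr rfl fun k _ => by ring

private lemma vmv_transpose (a b : n → ℤ) : (vecMulVec a b)ᵀ = vecMulVec b a := by
  ext i j; simp [vecMulVec_apply, mul_comm]

private lemma vmv_neg_left (a b : n → ℤ) : vecMulVec (-a) b = -vecMulVec a b := by
  ext i j; simp [vecMulVec_apply]

private lemma exists_sum_eq_gcd {ι : Type*} [DecidableEq ι] (v : ι → ℤ) (s : Finset ι) :
    ∃ c : ι → ℤ, ∑ i ∈ s, c i * v i = s.gcd v := by
  classical
  induction s using Finset.induction_on with
  | empty => exact ⟨0, by simp⟩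
  | @insert a s ha ih =>
    obtain ⟨c, hc⟩ := ih
    set G : ℤ := s.gcd v with hG
    refine ⟨fun i => if i = a then Int.gcdA (v a) G else Int.gcdB (v a) G * c i, ?_⟩
    rw [Finset.sum_insert ha, Finset.gcd_insert]
    have hsum : ∑ i ∈ s, (if i = a then Int.gcdA (v a) G else Int.gcdB (v a) G * c i) * v i
        = Int.gcdB (v a) G * G := by
      rw [← hc, Finset.mul_sum]
      refine Finset.sum_congr rfl fun i hi => ?_
      rw [if_neg (by rintro rfl; exact ha hi)]
      ring
    have hup : (fun i => if i = a then Int.gcdA (v a) G else Int.gcdB (v a) G * c i) a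
        = Int.gcdA (v a) G := by simp
    rw [hsum, hup, ← Int.coe_gcd, ← hG]
    linarith [Int.gcd_eq_gcd_ab (v a) G]

end AuxGeneric

section AuxJ

variable {g : ℕ}

private lemma JJv (x : Fin g ⊕ Fin g → ℤ) :
    Matrix.J (Fin g) ℤ *ᵥ (Matrix.J (Fin g) ℤ *ᵥ x) = -x := by
  rw [mulVec_mulVec, J_squared, neg_mulVec, one_mulVec]

private lemma skewJ (x y : Fin g ⊕ Fin g → ℤ) :
    x ⬝ᵥ (Matrix.J (Fin g) ℤ *ᵥ y) = -(y ⬝ᵥ (Matrix.J (Fin g) ℤ *ᵥ x)) := by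
  rw [dotProduct_mulVec, ← mulVec_transpose, J_transpose, neg_mulVec, neg_dotProduct,
    dotProduct_comm]

private lemma omega_self (x : Fin g ⊕ Fin g → ℤ) :
    x ⬝ᵥ (Matrix.J (Fin g) ℤ *ᵥ x) = 0 := by
  have h := skewJ x x; linarith

private lemma vmv_mul_J (a b : Fin g ⊕ Fin g → ℤ) :
    vecMulVec a b * Matrix.J (Fin g) ℤ = vecMulVec a (-(Matrix.J (Fin g) ℤ *ᵥ b)) := by
  rw [vmv_mul_mat, J_transpose, neg_mulVec]

private lemma J_mul_vmv (a b : Fin g ⊕ Fin g → ℤ) :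
    Matrix.J (Fin g) ℤ * vecMulVec a b = vecMulVec (Matrix.J (Fin g) ℤ *ᵥ a) b :=
  mat_mul_vmv _ _ _

end AuxJ

/-- The matrix of the symplectic transvection `T_v : x ↦ x + ω(x, v) • v` on `ℤ^{2g}`,
where `ω(x, y) = xᵀ J y` is the standard symplectic form (with `J` the standard
skew-symmetric matrix): acting on column vectors, `(T_v x) i = x i + (x ⬝ᵥ (J *ᵥ v)) * v i`. -/
def symplecticTransvection (g : ℕ) (v : Fin g ⊕ Fin g → ℤ) :
    Matrix (Fin g ⊕ Fin g) (Fin g ⊕ Fin g) ℤ :=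
  1 + Matrix.vecMulVec v (Matrix.J (Fin g) ℤ *ᵥ v)

set_option maxRecDepth 4000 in
/-- For `g ≥ 1` and a primitive vector `v ∈ ℤ^{2g}` (the gcd of its coordinates is 1),
the symplectic transvection `T_v` lies in `Sp(2g, ℤ)` and is a product of two elements
of finite order in `Sp(2g, ℤ)`. -/
theorem symplecticTransvection_eq_product_of_two_torsion (g : ℕ) (hg : 1 ≤ g)
    (v : Fin g ⊕ Fin g → ℤ) (hv : Finset.univ.gcd v = 1) :
    ∃ hmem : symplecticTransvection g v ∈ Matrix.symplecticGroup (Fin g) ℤ,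
      ∃ a b : Matrix.symplecticGroup (Fin g) ℤ,
        IsOfFinOrder a ∧ IsOfFinOrder b ∧
        (⟨symplecticTransvection g v, hmem⟩ : Matrix.symplecticGroup (Fin g) ℤ) = a * b := by
  classical
  obtain ⟨c, hc⟩ := exists_sum_eq_gcd v Finset.univ
  rw [hv] at hc
  set w : Fin g ⊕ Fin g → ℤ := -(Matrix.J (Fin g) ℤ *ᵥ c) with hwdef
  have hJw : Matrix.J (Fin g) ℤ *ᵥ w = c := by
    rw [hwdef, mulVec_neg, JJv, neg_neg]
  have h6 : v ⬝ᵥ (Matrix.J (Fin g) ℤ *ᵥ w) = 1 := by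
    rw [hJw, dotProduct, ← hc]
    exact Finset.sum_congr rfl fun i _ => mul_comm _ _
  have h5 : v ⬝ᵥ (Matrix.J (Fin g) ℤ *ᵥ v) = 0 := omega_self v
  have h8 : w ⬝ᵥ (Matrix.J (Fin g) ℤ *ᵥ w) = 0 := omega_self w
  have h7 : w ⬝ᵥ (Matrix.J (Fin g) ℤ *ᵥ v) = -1 := by rw [skewJ, h6]
  have h1 : (Matrix.J (Fin g) ℤ *ᵥ v) ⬝ᵥ v = 0 := by rw [dotProduct_comm]; exact h5
  have h2 : (Matrix.J (Fin g) ℤ *ᵥ v) ⬝ᵥ w = -1 := by rw [dotProduct_comm]; exact h7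
  have h3 : (Matrix.J (Fin g) ℤ *ᵥ w) ⬝ᵥ v = 1 := by rw [dotProduct_comm]; exact h6
  have h4 : (Matrix.J (Fin g) ℤ *ᵥ w) ⬝ᵥ w = 0 := by rw [dotProduct_comm]; exact h8
  -- products of the four elementary matrices
  have p11 : vecMulVec v (Matrix.J (Fin g) ℤ *ᵥ v) * vecMulVec v (Matrix.J (Fin g) ℤ *ᵥ v) = 0 := by
    rw [vmv_mul_vmv, h1, zero_smul]
  have p12 : vecMulVec v (Matrix.J (Fin g) ℤ *ᵥ v) * vecMulVec v (Matrix.J (Fin g) ℤ *ᵥ w) = 0 := by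
    rw [vmv_mul_vmv, h1, zero_smul]
  have p13 : vecMulVec v (Matrix.J (Fin g) ℤ *ᵥ v) * vecMulVec w (Matrix.J (Fin g) ℤ *ᵥ v) = -(vecMulVec v (Matrix.J (Fin g) ℤ *ᵥ v)) := by
    rw [vmv_mul_vmv, h2, neg_one_smul]
  have p14 : vecMulVec v (Matrix.J (Fin g) ℤ *ᵥ v) * vecMulVec w (Matrix.J (Fin g) ℤ *ᵥ w) = -(vecMulVec v (Matrix.J (Fin g) ℤ *ᵥ w)) := by
    rw [vmv_mul_vmv, h2, neg_one_smul]
  have p21 : vecMulVec v (Matrix.J (Fin g) ℤ *ᵥ w) * vecMulVec v (Matrix.J (Fin g) ℤ *ᵥ v) = vecMulVec v (Matrix.J (Fin g) ℤ *ᵥ v) := by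
    rw [vmv_mul_vmv, h3, one_smul]
  have p22 : vecMulVec v (Matrix.J (Fin g) ℤ *ᵥ w) * vecMulVec v (Matrix.J (Fin g) ℤ *ᵥ w) = vecMulVec v (Matrix.J (Fin g) ℤ *ᵥ w) := by
    rw [vmv_mul_vmv, h3, one_smul]
  have p23 : vecMulVec v (Matrix.J (Fin g) ℤ *ᵥ w) * vecMulVec w (Matrix.J (Fin g) ℤ *ᵥ v) = 0 := by
    rw [vmv_mul_vmv, h4, zero_smul]
  have p24 : vecMulVec v (Matrix.J (Fin g) ℤ *ᵥ w) * vecMulVec w (Matrix.J (Fin g) ℤ *ᵥ w) = 0 := by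
    rw [vmv_mul_vmv, h4, zero_smul]
  have p31 : vecMulVec w (Matrix.J (Fin g) ℤ *ᵥ v) * vecMulVec v (Matrix.J (Fin g) ℤ *ᵥ v) = 0 := by
    rw [vmv_mul_vmv, h1, zero_smul]
  have p32 : vecMulVec w (Matrix.J (Fin g) ℤ *ᵥ v) * vecMulVec v (Matrix.J (Fin g) ℤ *ᵥ w) = 0 := by
    rw [vmv_mul_vmv, h1, zero_smul]
  have p33 : vecMulVec w (Matrix.J (Fin g) ℤ *ᵥ v) * vecMulVec w (Matrix.J (Fin g) ℤ *ᵥ v) = -(vecMulVec w (Matrix.J (Fin g) ℤ *ᵥ v)) := by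
    rw [vmv_mul_vmv, h2, neg_one_smul]
  have p34 : vecMulVec w (Matrix.J (Fin g) ℤ *ᵥ v) * vecMulVec w (Matrix.J (Fin g) ℤ *ᵥ w) = -(vecMulVec w (Matrix.J (Fin g) ℤ *ᵥ w)) := by
    rw [vmv_mul_vmv, h2, neg_one_smul]
  have p41 : vecMulVec w (Matrix.J (Fin g) ℤ *ᵥ w) * vecMulVec v (Matrix.J (Fin g) ℤ *ᵥ v) = vecMulVec w (Matrix.J (Fin g) ℤ *ᵥ v) := by
    rw [vmv_mul_vmv, h3, one_smul]
  have p42 : vecMulVec w (Matrix.J (Fin g) ℤ *ᵥ w) * vecMulVec v (Matrix.J (Fin g) ℤ *ᵥ w) = vecMulVec w (Matrix.J (Fin g) ℤ *ᵥ w) := by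
    rw [vmv_mul_vmv, h3, one_smul]
  have p43 : vecMulVec w (Matrix.J (Fin g) ℤ *ᵥ w) * vecMulVec w (Matrix.J (Fin g) ℤ *ᵥ v) = 0 := by
    rw [vmv_mul_vmv, h4, zero_smul]
  have p44 : vecMulVec w (Matrix.J (Fin g) ℤ *ᵥ w) * vecMulVec w (Matrix.J (Fin g) ℤ *ᵥ w) = 0 := by
    rw [vmv_mul_vmv, h4, zero_smul]
  -- products with J and transposed factors
  have q1 : vecMulVec v (Matrix.J (Fin g) ℤ *ᵥ v) * Matrix.J (Fin g) ℤ = vecMulVec v v := by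
    rw [vmv_mul_J, JJv, neg_neg]
  have q2 : vecMulVec v (Matrix.J (Fin g) ℤ *ᵥ w) * Matrix.J (Fin g) ℤ = vecMulVec v w := by
    rw [vmv_mul_J, JJv, neg_neg]
  have q3 : vecMulVec w (Matrix.J (Fin g) ℤ *ᵥ v) * Matrix.J (Fin g) ℤ = vecMulVec w v := by
    rw [vmv_mul_J, JJv, neg_neg]
  have q4 : vecMulVec w (Matrix.J (Fin g) ℤ *ᵥ w) * Matrix.J (Fin g) ℤ = vecMulVec w w := by
    rw [vmv_mul_J, JJv, neg_neg]
  have r1 : Matrix.J (Fin g) ℤ * vecMulVec (Matrix.J (Fin g) ℤ *ᵥ v) v = -vecMulVec v v := by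
    rw [J_mul_vmv, JJv, vmv_neg_left]
  have r2 : Matrix.J (Fin g) ℤ * vecMulVec (Matrix.J (Fin g) ℤ *ᵥ w) v = -vecMulVec w v := by
    rw [J_mul_vmv, JJv, vmv_neg_left]
  have r3 : Matrix.J (Fin g) ℤ * vecMulVec (Matrix.J (Fin g) ℤ *ᵥ w) w = -vecMulVec w w := by
    rw [J_mul_vmv, JJv, vmv_neg_left]
  have r4 : Matrix.J (Fin g) ℤ * vecMulVec (Matrix.J (Fin g) ℤ *ᵥ v) w = -vecMulVec v w := by
    rw [J_mul_vmv, JJv, vmv_neg_left]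
  have s_vv : ∀ p s : Fin g ⊕ Fin g → ℤ,
      vecMulVec p v * vecMulVec (Matrix.J (Fin g) ℤ *ᵥ v) s = 0 := fun p s => by
    rw [vmv_mul_vmv, h5, zero_smul]
  have s_vw : ∀ p s : Fin g ⊕ Fin g → ℤ,
      vecMulVec p v * vecMulVec (Matrix.J (Fin g) ℤ *ᵥ w) s = vecMulVec p s := fun p s => by
    rw [vmv_mul_vmv, h6, one_smul]
  have s_wv : ∀ p s : Fin g ⊕ Fin g → ℤ,
      vecMulVec p w * vecMulVec (Matrix.J (Fin g) ℤ *ᵥ v) s = -vecMulVec p s := fun p s => by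
    rw [vmv_mul_vmv, h7, neg_one_smul]
  have s_ww : ∀ p s : Fin g ⊕ Fin g → ℤ,
      vecMulVec p w * vecMulVec (Matrix.J (Fin g) ℤ *ᵥ w) s = 0 := fun p s => by
    rw [vmv_mul_vmv, h8, zero_smul]
  have hTdef : symplecticTransvection g v = (1 : Matrix (Fin g ⊕ Fin g) (Fin g ⊕ Fin g) ℤ) + vecMulVec v (Matrix.J (Fin g) ℤ *ᵥ v) := rfl
  -- membership of T
  have hmemT : symplecticTransvection g v ∈ Matrix.symplecticGroup (Fin g) ℤ := by
    rw [SymplecticGroup.mem_iff, hTdef]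
    simp only [transpose_add, transpose_one, vmv_transpose, mul_add, add_mul, mul_one, one_mul,
      q1, r1, s_vv, add_zero, zero_add]
    abel
  -- the rotation matrix B
  set B : Matrix (Fin g ⊕ Fin g) (Fin g ⊕ Fin g) ℤ := (1 : Matrix (Fin g ⊕ Fin g) (Fin g ⊕ Fin g) ℤ) + vecMulVec v (Matrix.J (Fin g) ℤ *ᵥ v) - vecMulVec v (Matrix.J (Fin g) ℤ *ᵥ w) + vecMulVec w (Matrix.J (Fin g) ℤ *ᵥ w) + vecMulVec w (Matrix.J (Fin g) ℤ *ᵥ v) with hBdef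
  have hmemB : B ∈ Matrix.symplecticGroup (Fin g) ℤ := by
    rw [SymplecticGroup.mem_iff, hBdef]
    simp only [transpose_add, transpose_sub, transpose_one, vmv_transpose,
      mul_add, add_mul, mul_sub, sub_mul, mul_one, one_mul,
      q1, q2, q3, q4, r1, r2, r3, r4, s_vv, s_vw, s_wv, s_ww,
      mul_neg, neg_mul, neg_neg, mul_zero, zero_mul, add_zero, zero_add]
    abel
  have hB2 : B * B = (1 : Matrix (Fin g ⊕ Fin g) (Fin g ⊕ Fin g) ℤ) - vecMulVec v (Matrix.J (Fin g) ℤ *ᵥ w) - vecMulVec v (Matrix.J (Fin g) ℤ *ᵥ w) + vecMulVec w (Matrix.J (Fin g) ℤ *ᵥ v) + vecMulVec w (Matrix.J (Fin g) ℤ *ᵥ v) := by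
    rw [hBdef]
    simp only [mul_add, add_mul, mul_sub, sub_mul, mul_one, one_mul, p11, p12, p13, p14, p21, p22, p23, p24, p31, p32, p33, p34, p41, p42, p43, p44, mul_neg, neg_mul, neg_neg, mul_zero, zero_mul, add_zero, zero_add]
    abel
  have hB4 : B ^ 4 = 1 := by
    have h44 : B ^ 4 = (B * B) * (B * B) := by
      rw [show (4 : ℕ) = 2 * 2 from rfl, pow_mul, pow_two, pow_two]
    rw [h44, hB2]
    simp only [mul_add, add_mul, mul_sub, sub_mul, mul_one, one_mul, p11, p12, p13, p14, p21, p22, p23, p24, p31, p32, p33, p34, p41, p42, p43, p44, mul_neg, neg_mul, neg_neg, mul_zero, zero_mul, add_zero, zero_add]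
    abel
  have hTB : symplecticTransvection g v * B = (1 : Matrix (Fin g ⊕ Fin g) (Fin g ⊕ Fin g) ℤ) + vecMulVec v (Matrix.J (Fin g) ℤ *ᵥ v) - vecMulVec v (Matrix.J (Fin g) ℤ *ᵥ w) - vecMulVec v (Matrix.J (Fin g) ℤ *ᵥ w) + vecMulVec w (Matrix.J (Fin g) ℤ *ᵥ v) + vecMulVec w (Matrix.J (Fin g) ℤ *ᵥ w) := by
    rw [hTdef, hBdef]
    simp only [mul_add, add_mul, mul_sub, sub_mul, mul_one, one_mul, p11, p12, p13, p14, p21, p22, p23, p24, p31, p32, p33, p34, p41, p42, p43, p44, mul_neg, neg_mul, neg_neg, mul_zero, zero_mul, add_zero, zero_add]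
    abel
  have hTB2 : (symplecticTransvection g v * B) * (symplecticTransvection g v * B)
      = (1 : Matrix (Fin g ⊕ Fin g) (Fin g ⊕ Fin g) ℤ) - vecMulVec v (Matrix.J (Fin g) ℤ *ᵥ v) - vecMulVec v (Matrix.J (Fin g) ℤ *ᵥ w) + vecMulVec w (Matrix.J (Fin g) ℤ *ᵥ v) + vecMulVec w (Matrix.J (Fin g) ℤ *ᵥ v) - vecMulVec w (Matrix.J (Fin g) ℤ *ᵥ w) := by
    rw [hTB]
    simp only [mul_add, add_mul, mul_sub, sub_mul, mul_one, one_mul, p11, p12, p13, p14, p21, p22, p23, p24, p31, p32, p33, p34, p41, p42, p43, p44, mul_neg, neg_mul, neg_neg, mul_zero, zero_mul, add_zero, zero_add]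
    abel
  have hA3 : (symplecticTransvection g v * B) ^ 3 = 1 := by
    have h33 : (symplecticTransvection g v * B) ^ 3
        = ((symplecticTransvection g v * B) * (symplecticTransvection g v * B))
          * (symplecticTransvection g v * B) := by
      rw [pow_succ, pow_succ, pow_one]
    rw [h33, hTB2, hTB]
    simp only [mul_add, add_mul, mul_sub, sub_mul, mul_one, one_mul, p11, p12, p13, p14, p21, p22, p23, p24, p31, p32, p33, p34, p41, p42, p43, p44, mul_neg, neg_mul, neg_neg, mul_zero, zero_mul, add_zero, zero_add]
    abel
  refine ⟨hmemT, ⟨symplecticTransvection g v * B, mul_mem hmemT hmemB⟩,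
    ⟨B ^ 3, pow_mem hmemB 3⟩, ?_, ?_, ?_⟩
  · refine isOfFinOrder_iff_pow_eq_one.mpr ⟨3, by norm_num, ?_⟩
    apply Subtype.ext
    rw [SubmonoidClass.coe_pow]
    exact hA3
  · refine isOfFinOrder_iff_pow_eq_one.mpr ⟨4, by norm_num, ?_⟩
    apply Subtype.ext
    rw [SubmonoidClass.coe_pow]
    show ((B ^ 3 : Matrix _ _ ℤ)) ^ 4 = 1
    rw [← pow_mul, show (3 * 4 : ℕ) = 4 * 3 from rfl, pow_mul, hB4, one_pow]
  · apply Subtype.ext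
    show symplecticTransvection g v = (symplecticTransvection g v * B) * B ^ 3
    have hB31 : B * B ^ 3 = B ^ 4 := by rw [← pow_succ']
    rw [mul_assoc, hB31, hB4, mul_one]
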